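/- For any real numbers α, β > 0, the set of product-form distributions in the type (I) polytope, namely {(μ_{00}, μ_{01}, μ_{10}, μ_{11}) ∈ ℝ⁴ : μ_{jk} ≥ 0, Σμ_{jk} = 1, αμ_{00} ≥ μ_{01}, αμ_{10} ≤ μ_{11}, βμ_{00} ≥ μ_{10}, βμ_{01} ≤ μ_{11}, and μ_{00}μ_{11} = μ_{01}μ_{10}}, consists of exactly the three points μ*_A = (1,0,0,0), μ*_B = (0,0,0,1), and μ*_C = (1, α, β, αβ)/((1+α)(1+β)). -/

import Mathlib

set_option maxHeartbeats 1600000 in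
/-- for `α, β > 0`, the product-form distributions (those with
`μ₀₀ μ₁₁ = μ₀₁ μ₁₀`) in the type (I) correlated-equilibrium polytope
(`αμ₀₀ ≥ μ₀₁`, `αμ₁₀ ≤ μ₁₁`, `βμ₀₀ ≥ μ₁₀`, `βμ₀₁ ≤ μ₁₁`) are exactly the three
points `μ*_A = (1,0,0,0)`, `μ*_B = (0,0,0,1)` and
`μ*_C = (1, α, β, αβ)/((1+α)(1+β))`. -/
theorem coordination_type_I_nash_points (α β : ℝ) (hα : 0 < α) (hβ : 0 < β) :
    {μ : Fin 4 → ℝ | (∀ j, 0 ≤ μ j) ∧ μ 0 + μ 1 + μ 2 + μ 3 = 1 ∧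
        μ 1 ≤ α * μ 0 ∧ α * μ 2 ≤ μ 3 ∧ μ 2 ≤ β * μ 0 ∧ β * μ 1 ≤ μ 3 ∧
        μ 0 * μ 3 = μ 1 * μ 2}
      = ({![(1 : ℝ), 0, 0, 0], ![(0 : ℝ), 0, 0, 1],
          ![1 / ((1 + α) * (1 + β)), α / ((1 + α) * (1 + β)),
            β / ((1 + α) * (1 + β)), α * β / ((1 + α) * (1 + β))]}
          : Set (Fin 4 → ℝ)) := by
  have hD : (0:ℝ) < (1 + α) * (1 + β) := by positivity
  ext μ
  simp only [Set.mem_setOf_eq, Set.mem_insert_iff, Set.mem_singleton_iff]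
  constructor
  · rintro ⟨hpos, hsum, h1, h2, h3, h4, hprod⟩
    have ha := hpos 0; have hb := hpos 1; have hc := hpos 2; have hd := hpos 3
    by_cases h0 : μ 0 = 0
    · have hb0 : μ 1 = 0 := le_antisymm (by nlinarith) hb
      have hc0 : μ 2 = 0 := le_antisymm (by nlinarith) hc
      have hd1 : μ 3 = 1 := by linarith
      right; left
      funext i; fin_cases i <;> simp [h0, hb0, hc0, hd1]
    · by_cases h3' : μ 3 = 0
      · have hc0 : μ 2 = 0 := le_antisymm (by nlinarith) hc
        have hb0 : μ 1 = 0 := le_antisymm (by nlinarith) hb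
        have ha1 : μ 0 = 1 := by linarith
        left
        funext i; fin_cases i <;> simp [ha1, hb0, hc0, h3']
      · have ha' : 0 < μ 0 := lt_of_le_of_ne ha (Ne.symm h0)
        have hd' : 0 < μ 3 := lt_of_le_of_ne hd (Ne.symm h3')
        have hble : μ 1 * μ 2 ≤ (α * μ 0) * (β * μ 0) :=
          mul_le_mul h1 h3 hc (by positivity)
        have hdge : (α * μ 2) * (β * μ 1) ≤ μ 3 * μ 3 :=
          mul_le_mul h2 h4 (by positivity) hd
        have hd_le : μ 3 ≤ α * β * μ 0 := by nlinarith
        have hd_ge : α * β * μ 0 ≤ μ 3 := by nlinarith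
        have hd_eq : μ 3 = α * β * μ 0 := le_antisymm hd_le hd_ge
        have hc' : 0 < μ 2 := by nlinarith
        have hb' : 0 < μ 1 := by nlinarith
        have keyb : (α * μ 0) * μ 2 ≤ μ 1 * μ 2 := by nlinarith [mul_le_mul_of_nonneg_left h3 (by positivity : (0:ℝ) ≤ α * μ 0)]
        have hb_eq : μ 1 = α * μ 0 := le_antisymm h1 (le_of_mul_le_mul_right keyb hc')
        have keyc : (β * μ 0) * μ 1 ≤ μ 2 * μ 1 := by nlinarith [mul_le_mul_of_nonneg_left h1 (by positivity : (0:ℝ) ≤ β * μ 0)]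
        have hc_eq : μ 2 = β * μ 0 := le_antisymm h3 (le_of_mul_le_mul_right keyc hb')
        have ha_eq : μ 0 = 1 / ((1 + α) * (1 + β)) := by
          rw [eq_div_iff (ne_of_gt hD)]; nlinarith
        right; right
        have hDne : ((1 + α) * (1 + β)) ≠ 0 := ne_of_gt hD
        funext i; fin_cases i
        · show μ 0 = 1 / ((1 + α) * (1 + β)); exact ha_eq
        · show μ 1 = α / ((1 + α) * (1 + β)); rw [hb_eq, ha_eq]; ring
        · show μ 2 = β / ((1 + α) * (1 + β)); rw [hc_eq, ha_eq]; ring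
        · show μ 3 = α * β / ((1 + α) * (1 + β)); rw [hd_eq, ha_eq]; ring
  · rintro (h | h | h) <;> subst h
    · refine ⟨fun i => ?_, by norm_num [Matrix.cons_val_two, Matrix.cons_val_three, Matrix.vecHead, Matrix.vecTail], by norm_num [hα.le, Matrix.cons_val_two, Matrix.cons_val_three, Matrix.vecHead, Matrix.vecTail], by norm_num [Matrix.cons_val_two, Matrix.cons_val_three, Matrix.vecHead, Matrix.vecTail],
        by norm_num [hβ.le, Matrix.cons_val_two, Matrix.cons_val_three, Matrix.vecHead, Matrix.vecTail], by norm_num [Matrix.cons_val_two, Matrix.cons_val_three, Matrix.vecHead, Matrix.vecTail], by norm_num [Matrix.cons_val_two, Matrix.cons_val_three, Matrix.vecHead, Matrix.vecTail]⟩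
      fin_cases i <;> norm_num
    · refine ⟨fun i => ?_, by norm_num [Matrix.cons_val_two, Matrix.cons_val_three, Matrix.vecHead, Matrix.vecTail], by norm_num [Matrix.cons_val_two, Matrix.cons_val_three, Matrix.vecHead, Matrix.vecTail], by norm_num [hα.le, Matrix.cons_val_two, Matrix.cons_val_three, Matrix.vecHead, Matrix.vecTail],
        by norm_num [Matrix.cons_val_two, Matrix.cons_val_three, Matrix.vecHead, Matrix.vecTail], by norm_num [hβ.le, Matrix.cons_val_two, Matrix.cons_val_three, Matrix.vecHead, Matrix.vecTail], by norm_num [Matrix.cons_val_two, Matrix.cons_val_three, Matrix.vecHead, Matrix.vecTail]⟩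
      fin_cases i <;> norm_num
    · refine ⟨fun i => ?_, ?_, ?_, ?_, ?_, ?_, ?_⟩
      · fin_cases i
        · show (0:ℝ) ≤ 1 / ((1 + α) * (1 + β)); positivity
        · show (0:ℝ) ≤ α / ((1 + α) * (1 + β)); positivity
        · show (0:ℝ) ≤ β / ((1 + α) * (1 + β)); positivity
        · show (0:ℝ) ≤ α * β / ((1 + α) * (1 + β)); positivity
      · show 1 / ((1+α)*(1+β)) + α / ((1+α)*(1+β)) + β / ((1+α)*(1+β))
            + α * β / ((1+α)*(1+β)) = 1
        field_simp; ring
      · show α / ((1+α)*(1+β)) ≤ α * (1 / ((1+α)*(1+β)))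
        rw [mul_one_div]
      · show α * (β / ((1+α)*(1+β))) ≤ α * β / ((1+α)*(1+β))
        rw [mul_div_assoc]
      · show β / ((1+α)*(1+β)) ≤ β * (1 / ((1+α)*(1+β)))
        rw [mul_one_div]
      · show β * (α / ((1+α)*(1+β))) ≤ α * β / ((1+α)*(1+β))
        exact le_of_eq (by ring)
      · show 1 / ((1+α)*(1+β)) * (α * β / ((1+α)*(1+β)))
            = α / ((1+α)*(1+β)) * (β / ((1+α)*(1+β)))
        ring
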